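/- arXiv:1703.02272 — 4 statements merged into one kernel-verified Lean document; each statement's English description precedes it below -/
import Mathlib

section
/- If W1 and W2 are finite subsets of ℤ² with W1 = {w0,w1,w2,w3} (four distinct points) and W2 = {w0,w1,w2,w3,w4} (five distinct points, so W1 ⊆ W2), then the Minkowski sumset W1 + W2 has cardinality at most 14. -/
open Pointwise

theorem sumset_card_le_fourteen (w0 w1 w2 w3 w4 : ℤ × ℤ)
    (hdist : ({w0, w1, w2, w3, w4} : Finset (ℤ × ℤ)).card = 5)
    (W1 W2 : Finset (ℤ × ℤ))
    (hW1 : W1 = {w0, w1, w2, w3}) (hW2 : W2 = {w0, w1, w2, w3, w4}) :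
    (W1 + W2).card ≤ 14 := by
  subst hW1 hW2
  have hsub : ({w0, w1, w2, w3} + {w0, w1, w2, w3, w4} : Finset (ℤ × ℤ)) ⊆
      {w0+w0, w0+w1, w0+w2, w0+w3, w0+w4, w1+w1, w1+w2, w1+w3, w1+w4,
       w2+w2, w2+w3, w2+w4, w3+w3, w3+w4} := by
    intro x hx
    simp only [Finset.mem_add, Finset.mem_insert, Finset.mem_singleton] at hx ⊢
    obtain ⟨a, ha, b, hb, rfl⟩ := hx
    rcases ha with rfl|rfl|rfl|rfl <;> rcases hb with rfl|rfl|rfl|rfl|rfl <;>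
      simp [add_comm]
  refine (Finset.card_le_card hsub).trans ?_
  repeat refine (Finset.card_insert_le _ _).trans (Nat.succ_le_succ ?_)
  simp
end

section
/- Let W1, W2 be nonempty finite subsets of ℤ² with |W1 ∪ W2| = 5. Then the discrete mixed volume D(W1,W2) = |W1 + W2| − |W1| − |W2| + 1 is at most 6. -/
open Pointwise

private lemma card_add_self_le {G : Type*} [AddCommMonoid G] [DecidableEq G]
    (s : Finset G) : (s + s).card ≤ Nat.choose (s.card + 1) 2 := by
  classical
  have hsub : s + s ⊆ s.sym2.image (Sym2.lift ⟨fun a b => a + b, fun a b => add_comm a b⟩) := by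
    intro x hx
    rw [Finset.mem_add] at hx
    obtain ⟨a, ha, b, hb, rfl⟩ := hx
    exact Finset.mem_image.2 ⟨s(a, b), Finset.mk_mem_sym2_iff.2 ⟨ha, hb⟩, rfl⟩
  calc (s + s).card ≤ _ := Finset.card_le_card hsub
    _ ≤ s.sym2.card := Finset.card_image_le
    _ = Nat.choose (s.card + 1) 2 := Finset.card_sym2 s

theorem discrete_mixed_volume_le_six (W1 W2 : Finset (ℤ × ℤ))
    (h1 : W1.Nonempty) (h2 : W2.Nonempty)
    (hcard : (W1 ∪ W2).card = 5) :
    ((W1 + W2).card : ℤ) - W1.card - W2.card + 1 ≤ 6 := by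
  classical
  set I := W1 ∩ W2 with hI
  set A := W1 \ W2 with hA
  set B := W2 \ W1 with hB
  have hsub : W1 + W2 ⊆ ((I + I) ∪ (I + B)) ∪ ((A + I) ∪ (A + B)) := by
    intro x hx
    rw [Finset.mem_add] at hx
    obtain ⟨a, ha, b, hb, rfl⟩ := hx
    by_cases ha2 : a ∈ W2 <;> by_cases hb2 : b ∈ W1
    · exact Finset.mem_union_left _ (Finset.mem_union_left _
        (Finset.add_mem_add (Finset.mem_inter.2 ⟨ha, ha2⟩) (Finset.mem_inter.2 ⟨hb2, hb⟩)))
    · exact Finset.mem_union_left _ (Finset.mem_union_right _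
        (Finset.add_mem_add (Finset.mem_inter.2 ⟨ha, ha2⟩) (Finset.mem_sdiff.2 ⟨hb, hb2⟩)))
    · exact Finset.mem_union_right _ (Finset.mem_union_left _
        (Finset.add_mem_add (Finset.mem_sdiff.2 ⟨ha, ha2⟩) (Finset.mem_inter.2 ⟨hb2, hb⟩)))
    · exact Finset.mem_union_right _ (Finset.mem_union_right _
        (Finset.add_mem_add (Finset.mem_sdiff.2 ⟨ha, ha2⟩) (Finset.mem_sdiff.2 ⟨hb, hb2⟩)))
  have hcards : (W1 + W2).card ≤ (I + I).card + (I + B).card + ((A + I).card + (A + B).card) :=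
    calc (W1 + W2).card ≤ (((I + I) ∪ (I + B)) ∪ ((A + I) ∪ (A + B))).card :=
          Finset.card_le_card hsub
      _ ≤ ((I + I) ∪ (I + B)).card + ((A + I) ∪ (A + B)).card := Finset.card_union_le _ _
      _ ≤ (I + I).card + (I + B).card + ((A + I).card + (A + B).card) :=
          Nat.add_le_add (Finset.card_union_le _ _) (Finset.card_union_le _ _)
  have hII : (I + I).card ≤ Nat.choose (I.card + 1) 2 := card_add_self_le I
  have hIB : (I + B).card ≤ I.card * B.card := Finset.card_add_le
  have hAI : (A + I).card ≤ A.card * I.card := Finset.card_add_le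
  have hAB : (A + B).card ≤ A.card * B.card := Finset.card_add_le
  have e1 : A.card + I.card = W1.card := by
    rw [hA, hI]; exact Finset.card_sdiff_add_card_inter _ _
  have e2 : B.card + I.card = W2.card := by
    rw [hB, hI, Finset.inter_comm]; exact Finset.card_sdiff_add_card_inter _ _
  have e3 : (W1 ∪ W2).card + I.card = W1.card + W2.card := by
    rw [hI]; exact Finset.card_union_add_card_inter _ _
  have main : ∀ i α β c : ℕ, i + α + β = 5 →
      c ≤ Nat.choose (i + 1) 2 + i * β + (α * i + α * β) → c ≤ 5 + (i + α) + (i + β) := by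
    intro i α β c h5 hc
    have hi5 : i ≤ 5 := by omega
    have hα5 : α ≤ 5 := by omega
    interval_cases i <;> interval_cases α <;> simp [Nat.choose] at hc ⊢ <;> omega
  have hc' : (W1 + W2).card ≤
      Nat.choose (I.card + 1) 2 + I.card * B.card + (A.card * I.card + A.card * B.card) :=
    hcards.trans (Nat.add_le_add (Nat.add_le_add hII hIB) (Nat.add_le_add hAI hAB))
  have key : (W1 + W2).card ≤ 5 + (I.card + A.card) + (I.card + B.card) :=
    main I.card A.card B.card _ (by omega) hc'
  omega
end

section
/- The system of two real polynomial equations x⁶ + (44/31)y³ − y = 0 and y⁶ + (44/31)x³ − x = 0 has at least 5 solutions (x,y) with x > 0 and y > 0. -/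
noncomputable section FiveSol

def gg (t : ℝ) : ℝ := t - (44 / 31) * t ^ 3

def phi (t : ℝ) : ℝ := (gg t) ^ ((1 : ℝ) / 6)

def HH (t : ℝ) : ℝ := gg (phi t) - t ^ 6

lemma phi_pow_six {t : ℝ} (ht : 0 < gg t) : (phi t) ^ 6 = gg t := by
  unfold phi
  rw [← Real.rpow_natCast (gg t ^ ((1:ℝ)/6)) 6, ← Real.rpow_mul ht.le]
  norm_num

lemma phi_bounds {t r r' : ℝ} (hr : 0 < r) (hr' : 0 ≤ r')
    (h1 : r ^ 6 ≤ gg t) (h2 : gg t ≤ r' ^ 6) : r ≤ phi t ∧ phi t ≤ r' := by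
  have ht : 0 < gg t := lt_of_lt_of_le (pow_pos hr 6) h1
  have hw6 : (phi t) ^ 6 = gg t := phi_pow_six ht
  have hwpos : 0 < phi t := Real.rpow_pos_of_pos ht _
  constructor
  · exact le_of_pow_le_pow_left₀ (n := 6) (by norm_num) hwpos.le (by rw [hw6]; exact h1)
  · exact le_of_pow_le_pow_left₀ (n := 6) (by norm_num) hr' (by rw [hw6]; exact h2)

lemma HH_pos {t r r' : ℝ} (hr : 0 < r) (hr' : 0 ≤ r')
    (h1 : r ^ 6 ≤ gg t) (h2 : gg t ≤ r' ^ 6)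
    (key : t ^ 6 < r - (44 / 31) * r' ^ 3) : 0 < HH t := by
  obtain ⟨hl, hu⟩ := phi_bounds hr hr' h1 h2
  have hwpos : (0:ℝ) ≤ phi t := le_trans hr.le hl
  have hw3 : (phi t) ^ 3 ≤ r' ^ 3 := pow_le_pow_left₀ hwpos hu 3
  unfold HH gg
  nlinarith [hw3, hl, key]

lemma HH_neg {t r r' : ℝ} (hr : 0 < r) (hr' : 0 ≤ r')
    (h1 : r ^ 6 ≤ gg t) (h2 : gg t ≤ r' ^ 6)
    (key : r' - (44 / 31) * r ^ 3 < t ^ 6) : HH t < 0 := by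
  obtain ⟨hl, hu⟩ := phi_bounds hr hr' h1 h2
  have hw3 : r ^ 3 ≤ (phi t) ^ 3 := pow_le_pow_left₀ hr.le hl 3
  unfold HH gg
  nlinarith [hw3, hu, key]

lemma HH_cont : Continuous HH := by
  have hg : Continuous gg := by unfold gg; fun_prop
  have hrpow : Continuous (fun x : ℝ => x ^ ((1:ℝ)/6)) :=
    continuous_iff_continuousAt.2 fun x =>
      Real.continuousAt_rpow_const x _ (Or.inr (by norm_num))
  have hphi : Continuous phi := hrpow.comp hg
  unfold HH
  exact (hg.comp hphi).sub (by fun_prop)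

lemma exists_root_pn {a b : ℝ} (hab : a ≤ b) (ha : 0 < HH a) (hb : HH b < 0) :
    ∃ x ∈ Set.Icc a b, HH x = 0 := by
  have h := intermediate_value_Icc' hab HH_cont.continuousOn
  have : (0:ℝ) ∈ Set.Icc (HH b) (HH a) := ⟨hb.le, ha.le⟩
  obtain ⟨x, hx, hx0⟩ := h this
  exact ⟨x, hx, hx0⟩

lemma exists_root_np {a b : ℝ} (hab : a ≤ b) (ha : HH a < 0) (hb : 0 < HH b) :
    ∃ x ∈ Set.Icc a b, HH x = 0 := by
  have h := intermediate_value_Icc hab HH_cont.continuousOn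
  have : (0:ℝ) ∈ Set.Icc (HH a) (HH b) := ⟨ha.le, hb.le⟩
  obtain ⟨x, hx, hx0⟩ := h this
  exact ⟨x, hx, hx0⟩

lemma root_gives_sol {x : ℝ} (hx0 : (0.5:ℝ) ≤ x) (hx1 : x ≤ 0.83) (hH : HH x = 0) :
    0 < x ∧ 0 < phi x ∧
      x ^ 6 + (44 / 31) * (phi x) ^ 3 - phi x = 0 ∧
      (phi x) ^ 6 + (44 / 31) * x ^ 3 - x = 0 := by
  have hxpos : 0 < x := by linarith
  have hgt : 0 < gg x := by
    unfold gg
    have hx2 : x ^ 2 ≤ 0.6889 := by nlinarith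
    have hx3 : x ^ 3 ≤ 0.6889 * x := by nlinarith
    nlinarith
  have hypos : 0 < phi x := Real.rpow_pos_of_pos hgt _
  have hy6 : (phi x) ^ 6 = gg x := phi_pow_six hgt
  refine ⟨hxpos, hypos, ?_, ?_⟩
  · have : gg (phi x) = x ^ 6 := by
      have := hH; unfold HH at this; linarith
    unfold gg at this; linarith
  · unfold gg at hy6; linarith

end FiveSol

set_option maxHeartbeats 1000000 in
theorem five_positive_solutions :
    ∃ S : Finset (ℝ × ℝ), 5 ≤ S.card ∧
      ∀ p ∈ S, 0 < p.1 ∧ 0 < p.2 ∧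
        p.1 ^ 6 + (44 / 31) * p.2 ^ 3 - p.2 = 0 ∧
        p.2 ^ 6 + (44 / 31) * p.1 ^ 3 - p.1 = 0 := by
  have H55 : 0 < HH 0.55 :=
    HH_pos (r := 824368657/10^9) (r' := 824368658/10^9)
      (by norm_num) (by norm_num) (by unfold gg; norm_num) (by unfold gg; norm_num)
      (by norm_num)
  have H64 : HH 0.64 < 0 :=
    HH_neg (r := 802913531/10^9) (r' := 802913532/10^9)
      (by norm_num) (by norm_num) (by unfold gg; norm_num) (by unfold gg; norm_num)
      (by norm_num)
  have H70 : HH 0.70 < 0 :=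
    HH_neg (r := 772890655/10^9) (r' := 772890656/10^9)
      (by norm_num) (by norm_num) (by unfold gg; norm_num) (by unfold gg; norm_num)
      (by norm_num)
  have H731 : 0 < HH 0.731 :=
    HH_pos (r := 749010733/10^9) (r' := 749010734/10^9)
      (by norm_num) (by norm_num) (by unfold gg; norm_num) (by unfold gg; norm_num)
      (by norm_num)
  have H735 : 0 < HH 0.735 :=
    HH_pos (r := 745323803/10^9) (r' := 745323804/10^9)
      (by norm_num) (by norm_num) (by unfold gg; norm_num) (by unfold gg; norm_num)
      (by norm_num)
  have H749 : HH 0.749 < 0 :=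
    HH_neg (r := 731015417/10^9) (r' := 731015418/10^9)
      (by norm_num) (by norm_num) (by unfold gg; norm_num) (by unfold gg; norm_num)
      (by norm_num)
  have H752 : HH 0.752 < 0 :=
    HH_neg (r := 727627080/10^9) (r' := 727627081/10^9)
      (by norm_num) (by norm_num) (by unfold gg; norm_num) (by unfold gg; norm_num)
      (by norm_num)
  have H78 : 0 < HH 0.78 :=
    HH_pos (r := 688418274/10^9) (r' := 688418275/10^9)
      (by norm_num) (by norm_num) (by unfold gg; norm_num) (by unfold gg; norm_num)
      (by norm_num)
  have H79 : 0 < HH 0.79 :=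
    HH_pos (r := 669684011/10^9) (r' := 669684012/10^9)
      (by norm_num) (by norm_num) (by unfold gg; norm_num) (by unfold gg; norm_num)
      (by norm_num)
  have H83 : HH 0.83 < 0 :=
    HH_neg (r := 513956319/10^9) (r' := 513956320/10^9)
      (by norm_num) (by norm_num) (by unfold gg; norm_num) (by unfold gg; norm_num)
      (by norm_num)
  obtain ⟨x1, hx1m, hx1⟩ := exists_root_pn (by norm_num) H55 H64
  obtain ⟨x2, hx2m, hx2⟩ := exists_root_np (by norm_num) H70 H731
  obtain ⟨x3, hx3m, hx3⟩ := exists_root_pn (by norm_num) H735 H749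
  obtain ⟨x4, hx4m, hx4⟩ := exists_root_np (by norm_num) H752 H78
  obtain ⟨x5, hx5m, hx5⟩ := exists_root_pn (by norm_num) H79 H83
  obtain ⟨hx1a, hx1b⟩ := hx1m
  obtain ⟨hx2a, hx2b⟩ := hx2m
  obtain ⟨hx3a, hx3b⟩ := hx3m
  obtain ⟨hx4a, hx4b⟩ := hx4m
  obtain ⟨hx5a, hx5b⟩ := hx5m
  have s1 := root_gives_sol (by linarith) (by linarith) hx1
  have s2 := root_gives_sol (by linarith) (by linarith) hx2
  have s3 := root_gives_sol (by linarith) (by linarith) hx3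
  have s4 := root_gives_sol (by linarith) (by linarith) hx4
  have s5 := root_gives_sol (by linarith) (by linarith) hx5
  have hlt12 : x1 < x2 := by linarith
  have hlt23 : x2 < x3 := by linarith
  have hlt34 : x3 < x4 := by linarith
  have hlt45 : x4 < x5 := by linarith
  have ne12 : ((x1, phi x1) : ℝ × ℝ) ≠ (x2, phi x2) := by
    intro h; have := congrArg Prod.fst h; simp only at this; linarith
  have ne13 : ((x1, phi x1) : ℝ × ℝ) ≠ (x3, phi x3) := by
    intro h; have := congrArg Prod.fst h; simp only at this; linarith
  have ne14 : ((x1, phi x1) : ℝ × ℝ) ≠ (x4, phi x4) := by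
    intro h; have := congrArg Prod.fst h; simp only at this; linarith
  have ne15 : ((x1, phi x1) : ℝ × ℝ) ≠ (x5, phi x5) := by
    intro h; have := congrArg Prod.fst h; simp only at this; linarith
  have ne23 : ((x2, phi x2) : ℝ × ℝ) ≠ (x3, phi x3) := by
    intro h; have := congrArg Prod.fst h; simp only at this; linarith
  have ne24 : ((x2, phi x2) : ℝ × ℝ) ≠ (x4, phi x4) := by
    intro h; have := congrArg Prod.fst h; simp only at this; linarith
  have ne25 : ((x2, phi x2) : ℝ × ℝ) ≠ (x5, phi x5) := by
    intro h; have := congrArg Prod.fst h; simp only at this; linarith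
  have ne34 : ((x3, phi x3) : ℝ × ℝ) ≠ (x4, phi x4) := by
    intro h; have := congrArg Prod.fst h; simp only at this; linarith
  have ne35 : ((x3, phi x3) : ℝ × ℝ) ≠ (x5, phi x5) := by
    intro h; have := congrArg Prod.fst h; simp only at this; linarith
  have ne45 : ((x4, phi x4) : ℝ × ℝ) ≠ (x5, phi x5) := by
    intro h; have := congrArg Prod.fst h; simp only at this; linarith
  refine ⟨{(x1, phi x1), (x2, phi x2), (x3, phi x3), (x4, phi x4), (x5, phi x5)}, ?_, ?_⟩
  · rw [Finset.card_insert_of_notMem (by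
        simp only [Finset.mem_insert, Finset.mem_singleton, not_or]
        exact ⟨ne12, ne13, ne14, ne15⟩),
      Finset.card_insert_of_notMem (by
        simp only [Finset.mem_insert, Finset.mem_singleton, not_or]
        exact ⟨ne23, ne24, ne25⟩),
      Finset.card_insert_of_notMem (by
        simp only [Finset.mem_insert, Finset.mem_singleton, not_or]
        exact ⟨ne34, ne35⟩),
      Finset.card_insert_of_notMem (by
        simp only [Finset.mem_singleton]
        exact ne45),
      Finset.card_singleton]
  · intro p hp
    simp only [Finset.mem_insert, Finset.mem_singleton] at hp
    rcases hp with h | h | h | h | h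
    · subst h; exact s1
    · subst h; exact s2
    · subst h; exact s3
    · subst h; exact s4
    · subst h; exact s5
end

section
/- Let m1 > 0, n2 > 0 and m2 be integers. The map sending (y1, y2) ∈ (ℝ_{>0})² to (x, y2) with x = y1^{m1} gives a bijection between positive solutions (y1,y2) of the equation −1 + y1^{m1} + y1^{m2} y2^{n2} = 0 and pairs (x, y2) with 0 < x < 1 and y2 = x^{k}(1−x)^{l}, where k = −m2/(m1 n2) and l = 1/n2 (real exponents, x^k meaning exp(k·log x)). -/
theorem trinomial_substitution (m1 m2 n2 : ℤ) (hm1 : 0 < m1) (hn2 : 0 < n2) :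
    ∀ y1 y2 : ℝ, 0 < y1 → 0 < y2 →
      ((-1 + y1 ^ m1 + y1 ^ m2 * y2 ^ n2 = 0) ↔
        (0 < y1 ^ m1 ∧ y1 ^ m1 < 1 ∧
          y2 = (y1 ^ m1) ^ (-(m2 : ℝ) / ((m1 : ℝ) * (n2 : ℝ))) *
            (1 - y1 ^ m1) ^ (1 / (n2 : ℝ)))) := by
  intro y1 y2 hy1 hy2
  have hm1' : (m1 : ℝ) ≠ 0 := by exact_mod_cast hm1.ne'
  have hn2' : (n2 : ℝ) ≠ 0 := by exact_mod_cast hn2.ne'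
  have hx : (0:ℝ) < y1 ^ m1 := zpow_pos hy1 _
  have hlogx : Real.log (y1 ^ m1) = (m1 : ℝ) * Real.log y1 := Real.log_zpow _ _
  constructor
  · intro heq
    have hpos : 0 < y1 ^ m2 * y2 ^ n2 := mul_pos (zpow_pos hy1 _) (zpow_pos hy2 _)
    have hlt : y1 ^ m1 < 1 := by linarith
    refine ⟨hx, hlt, ?_⟩
    have h1x : (0:ℝ) < 1 - y1 ^ m1 := by linarith
    have h2 : y1 ^ m2 * y2 ^ n2 = 1 - y1 ^ m1 := by linarith
    have hlog : (m2 : ℝ) * Real.log y1 + (n2 : ℝ) * Real.log y2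
        = Real.log (1 - y1 ^ m1) := by
      rw [← Real.log_zpow, ← Real.log_zpow,
        ← Real.log_mul (zpow_pos hy1 _).ne' (zpow_pos hy2 _).ne', h2]
    rw [Real.rpow_def_of_pos hx, Real.rpow_def_of_pos h1x, ← Real.exp_add,
      ← Real.exp_log hy2]
    congr 1
    have hy2log : Real.log y2
        = (Real.log (1 - y1 ^ m1) - (m2 : ℝ) * Real.log y1) / n2 := by
      field_simp
      linarith
    rw [hy2log, hlogx]
    field_simp
    ring
  · rintro ⟨-, hlt, hy2eq⟩
    have h1x : (0:ℝ) < 1 - y1 ^ m1 := by linarith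
    suffices h : y1 ^ m2 * y2 ^ n2 = 1 - y1 ^ m1 by linarith
    have hpos : 0 < y1 ^ m2 * y2 ^ n2 := mul_pos (zpow_pos hy1 _) (zpow_pos hy2 _)
    have hL : Real.log (y1 ^ m2 * y2 ^ n2) = Real.log (1 - y1 ^ m1) := by
      rw [Real.log_mul (zpow_pos hy1 _).ne' (zpow_pos hy2 _).ne',
        Real.log_zpow, Real.log_zpow, hy2eq,
        Real.log_mul (Real.rpow_pos_of_pos hx _).ne' (Real.rpow_pos_of_pos h1x _).ne',
        Real.log_rpow hx, Real.log_rpow h1x, hlogx]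
      field_simp
      ring
    have := congrArg Real.exp hL
    rwa [Real.exp_log hpos, Real.exp_log h1x] at this
end
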